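/- Let n ≥ 1, let y₁,…,yₙ ∈ (0,1), and let λ ∈ (−1,0). Then there exists θ* in the closed interval [n/(−2·Σ_{i=1}^n log yᵢ), n/(−Σ_{i=1}^n log yᵢ)] such that ψ(θ*) = 0; that is, the likelihood equation for the shape parameter θ of the GTLD (with α, β, λ known) has at least one solution in that interval. -/
import Mathlib


open Real

/-- The profile score function for the shape parameter `θ` of the GTLD:
`ψ(θ) = n/θ + Σᵢ log yᵢ − 2λ Σᵢ yᵢ^θ log yᵢ/(1 + λ − 2λ yᵢ^θ)`. -/
noncomputable def psi (n : ℕ) (y : Fin n → ℝ) (lam : ℝ) (θ : ℝ) : ℝ :=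
  (n : ℝ) / θ + ∑ i, Real.log (y i) -
    2 * lam * ∑ i, (y i) ^ θ * Real.log (y i) / (1 + lam - 2 * lam * (y i) ^ θ)

/-- Existence of an MLE for `θ` when `λ ∈ (−1,0)`: the likelihood equation
`ψ(θ) = 0` has at least one solution in
`[n/(−2Σ log yᵢ), n/(−Σ log yᵢ)]`. -/
theorem gtld_mle_exists (n : ℕ) (hn : 1 ≤ n) (y : Fin n → ℝ)
    (hy : ∀ i, y i ∈ Set.Ioo (0 : ℝ) 1) (lam : ℝ)
    (hlam : lam ∈ Set.Ioo (-1 : ℝ) 0) :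
    ∃ θ ∈ Set.Icc ((n : ℝ) / (-2 * ∑ i, Real.log (y i)))
        ((n : ℝ) / (-∑ i, Real.log (y i))),
      psi n y lam θ = 0 := by
  obtain ⟨hlam1, hlam0⟩ := hlam
  have hnpos : (0 : ℝ) < n := by exact_mod_cast hn
  set S := ∑ i, Real.log (y i) with hSdef
  have hne : (Finset.univ : Finset (Fin n)).Nonempty := by
    rw [Finset.univ_nonempty_iff]
    exact Fin.pos_iff_nonempty.mp hn
  have hSneg : S < 0 :=
    Finset.sum_neg (fun i _ => Real.log_neg (hy i).1 (hy i).2) hne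
  set a := (n : ℝ) / (-2 * S) with ha
  set b := (n : ℝ) / (-S) with hb
  have hapos : 0 < a := div_pos hnpos (by linarith)
  have hbpos : 0 < b := div_pos hnpos (by linarith)
  have hab : a ≤ b := by
    apply div_le_div_of_nonneg_left (le_of_lt hnpos) (by linarith)
    linarith
  -- positivity of powers and denominators
  have hpow : ∀ (i : Fin n) (θ : ℝ), 0 < (y i) ^ θ :=
    fun i θ => Real.rpow_pos_of_pos (hy i).1 θ
  have hden : ∀ (i : Fin n) (θ : ℝ), 0 < 1 + lam - 2 * lam * (y i) ^ θ := by
    intro i θ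
    have h1 := hpow i θ
    nlinarith
  -- continuity on the interval
  have hcont : ContinuousOn (psi n y lam) (Set.Icc a b) := by
    have hsub : Set.Icc a b ⊆ {θ : ℝ | θ ≠ 0} := by
      intro θ hθ
      have := hθ.1
      simp only [Set.mem_setOf_eq]
      intro h; rw [h] at this; linarith
    unfold psi
    apply ContinuousOn.sub
    · apply ContinuousOn.add
      · exact (continuousOn_const.div continuousOn_id fun θ hθ => hsub hθ)
      · exact continuousOn_const
    · apply ContinuousOn.mul continuousOn_const
      apply continuousOn_finset_sum
      intro i _
      have hci : Continuous fun θ : ℝ => (y i) ^ θ :=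
        continuous_iff_continuousAt.mpr fun x =>
          continuousAt_const_rpow (ne_of_gt (hy i).1)
      apply ContinuousOn.div
      · exact (hci.continuousOn.mul continuousOn_const)
      · exact continuousOn_const.sub (continuousOn_const.mul hci.continuousOn)
      · intro θ _; exact ne_of_gt (hden i θ)
  -- key bound: 2λ * Σ term ≤ -S, with each term ≤ -log yᵢ
  have hterm : ∀ (θ : ℝ) (i : Fin n),
      2 * lam * ((y i) ^ θ * Real.log (y i) / (1 + lam - 2 * lam * (y i) ^ θ))
        ≤ -Real.log (y i) := by
    intro θ i
    have hp := hpow i θ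
    have hd := hden i θ
    have hL : Real.log (y i) < 0 := Real.log_neg (hy i).1 (hy i).2
    rw [mul_div_assoc']
    rw [div_le_iff₀ hd]
    nlinarith [mul_nonneg (le_of_lt (neg_pos.mpr hL)) (by linarith : (0:ℝ) ≤ 1 + lam)]
  have hsumle : ∀ θ : ℝ,
      2 * lam * ∑ i, (y i) ^ θ * Real.log (y i) / (1 + lam - 2 * lam * (y i) ^ θ)
        ≤ -S := by
    intro θ
    rw [Finset.mul_sum]
    calc ∑ i, 2 * lam * ((y i) ^ θ * Real.log (y i) / (1 + lam - 2 * lam * (y i) ^ θ))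
        ≤ ∑ i, -Real.log (y i) := Finset.sum_le_sum fun i _ => hterm θ i
      _ = -S := by rw [hSdef, ← Finset.sum_neg_distrib]
  -- each summand is negative, so 2λ * Σ ≥ 0
  have hsumge : ∀ θ : ℝ,
      0 ≤ 2 * lam * ∑ i, (y i) ^ θ * Real.log (y i) / (1 + lam - 2 * lam * (y i) ^ θ) := by
    intro θ
    have hsum : ∑ i, (y i) ^ θ * Real.log (y i) / (1 + lam - 2 * lam * (y i) ^ θ) ≤ 0 := by
      apply Finset.sum_nonpos
      intro i _
      apply div_nonpos_of_nonpos_of_nonneg _ (le_of_lt (hden i θ))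
      exact mul_nonpos_of_nonneg_of_nonpos (le_of_lt (hpow i θ))
        (le_of_lt (Real.log_neg (hy i).1 (hy i).2))
    nlinarith
  -- value at a: ψ(a) ≥ 0
  have hna : (n : ℝ) / a = -2 * S := by
    rw [ha, div_div_cancel₀]
    exact ne_of_gt hnpos
  have hnb : (n : ℝ) / b = -S := by
    rw [hb, div_div_cancel₀]
    exact ne_of_gt hnpos
  have hpsia : 0 ≤ psi n y lam a := by
    unfold psi
    rw [← hSdef, hna]
    have := hsumle a
    linarith
  have hpsib : psi n y lam b ≤ 0 := by
    unfold psi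
    rw [← hSdef, hnb]
    have := hsumge b
    linarith
  have := intermediate_value_Icc' hab hcont
  have h0 : (0 : ℝ) ∈ Set.Icc (psi n y lam b) (psi n y lam a) := ⟨hpsib, hpsia⟩
  obtain ⟨θ, hθ, hψ⟩ := this h0
  exact ⟨θ, hθ, hψ⟩
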